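/- For all n ≥ 1, the length of the T-module T/Iₙ equals (2(q+m)+1)·binom(n+1,2) = (2(q+m)+1)·n(n+1)/2. -/

import Mathlib

open MvPolynomial

/-- The monomial ideal `J = (x₂², x₂x₃^{q+m}, x₃^{q+m+1})` of `T = k[x₂,x₃]`
(here `X 0 = x₂`, `X 1 = x₃`). -/
noncomputable def Jideal (k : Type*) [Field k] (q m : ℕ) : Ideal (MvPolynomial (Fin 2) k) :=
  Ideal.span {X 0 ^ 2, X 0 * X 1 ^ (q+m), X 1 ^ (q+m+1)}

/-- The monomial ideal `F = (x₃^{2(q+m)+1})` of `T`. -/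
noncomputable def Fideal (k : Type*) [Field k] (q m : ℕ) : Ideal (MvPolynomial (Fin 2) k) :=
  Ideal.span {X 1 ^ (2*(q+m)+1)}

/-- `Iₙ = Σ_{n₁+2n₂=n} F^{n₂} J^{n₁}`. -/
noncomputable def Iideal (k : Type*) [Field k] (q m n : ℕ) : Ideal (MvPolynomial (Fin 2) k) :=
  ⨆ (c : ℕ × ℕ) (_ : c.1 + 2 * c.2 = n), (Fideal k q m) ^ c.2 * (Jideal k q m) ^ c.1

/-- The length of a module, as the Krull dimension of its lattice of submodules. -/
noncomputable def moduleLength (R M : Type*) [Ring R] [AddCommGroup M] [Module R M] :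
    WithBot ℕ∞ :=
  Order.krullDim (Submodule R M)

namespace St7



/-- Threshold function for the staircase of `Iₙ` (with `b = 2(q+m)+1`). -/
def tau (b n i : ℕ) : ℕ := ((n - i / 2) * b + (1 - i % 2)) / 2

lemma tau_eval (b n s u : ℕ) (hu : u < 2) :
    tau b n (2 * s + u) = ((n - s) * b + (1 - u)) / 2 := by
  unfold tau
  have h1 : (2 * s + u) / 2 = s := by omega
  have h2 : (2 * s + u) % 2 = u := by omega
  rw [h1, h2]

lemma tau_zero (b i : ℕ) : tau b 0 i = 0 := by
  simp only [tau, Nat.zero_sub, Nat.zero_mul, Nat.zero_add]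
  omega

lemma tau_succ_le (b n : ℕ) (hb : 1 ≤ b) (i : ℕ) : tau b n (i + 1) ≤ tau b n i := by
  obtain ⟨s, u, hu, rfl⟩ : ∃ s u, u < 2 ∧ i = 2 * s + u := ⟨i / 2, i % 2, by omega, by omega⟩
  interval_cases u
  · rw [show 2 * s + 0 + 1 = 2 * s + 1 from rfl, tau_eval b n s 0 (by omega),
      tau_eval b n s 1 (by omega)]
    omega
  · rw [show 2 * s + 1 + 1 = 2 * (s + 1) + 0 from by ring, tau_eval b n s 1 (by omega),
      tau_eval b n (s+1) 0 (by omega)]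
    rcases le_or_gt n s with h | h
    · rw [show n - s = 0 from by omega, show n - (s+1) = 0 from by omega]
      omega
    · have hZ : (n - (s+1)) + 1 ≤ n - s := by omega
      have hC : (n - (s+1)) * b + b ≤ (n - s) * b := by
        calc (n - (s+1)) * b + b = ((n - (s+1)) + 1) * b := by ring
          _ ≤ (n - s) * b := Nat.mul_le_mul_right b hZ
      omega

lemma tau_antitone (b n : ℕ) (hb : 1 ≤ b) : Antitone (tau b n) :=
  antitone_nat_of_succ_le (tau_succ_le b n hb)

lemma tau_superadd (b : ℕ) (hb : 4 ≤ b) (n n' i i' : ℕ) :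
    tau b (n + n') (i + i') ≤ tau b n i + tau b n' i' := by
  obtain ⟨s, u, hu, rfl⟩ : ∃ s u, u < 2 ∧ i = 2 * s + u := ⟨i / 2, i % 2, by omega, by omega⟩
  obtain ⟨s', u', hu', rfl⟩ : ∃ s u, u < 2 ∧ i' = 2 * s + u := ⟨i' / 2, i' % 2, by omega, by omega⟩
  have hmul : ∀ x y : ℕ, x ≤ y → x * b ≤ y * b := fun x y h => Nat.mul_le_mul_right b h
  interval_cases u <;> interval_cases u'
  · rw [show 2*s+0 + (2*s'+0) = 2*(s+s') + 0 from by ring, tau_eval b (n+n') (s+s') 0 (by omega),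
      tau_eval b n s 0 (by omega), tau_eval b n' s' 0 (by omega)]
    have hC : (n + n' - (s + s')) * b ≤ (n - s) * b + (n' - s') * b := by
      calc (n + n' - (s + s')) * b ≤ ((n - s) + (n' - s')) * b := hmul _ _ (by omega)
        _ = (n - s) * b + (n' - s') * b := by ring
    omega
  · rw [show 2*s+0 + (2*s'+1) = 2*(s+s') + 1 from by ring, tau_eval b (n+n') (s+s') 1 (by omega),
      tau_eval b n s 0 (by omega), tau_eval b n' s' 1 (by omega)]
    have hC : (n + n' - (s + s')) * b ≤ (n - s) * b + (n' - s') * b := by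
      calc (n + n' - (s + s')) * b ≤ ((n - s) + (n' - s')) * b := hmul _ _ (by omega)
        _ = (n - s) * b + (n' - s') * b := by ring
    omega
  · rw [show 2*s+1 + (2*s'+0) = 2*(s+s') + 1 from by ring, tau_eval b (n+n') (s+s') 1 (by omega),
      tau_eval b n s 1 (by omega), tau_eval b n' s' 0 (by omega)]
    have hC : (n + n' - (s + s')) * b ≤ (n - s) * b + (n' - s') * b := by
      calc (n + n' - (s + s')) * b ≤ ((n - s) + (n' - s')) * b := hmul _ _ (by omega)
        _ = (n - s) * b + (n' - s') * b := by ring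
    omega
  · rw [show 2*s+1 + (2*s'+1) = 2*(s+s'+1) + 0 from by ring,
      tau_eval b (n+n') (s+s'+1) 0 (by omega),
      tau_eval b n s 1 (by omega), tau_eval b n' s' 1 (by omega)]
    rcases le_or_gt (n + n') (s + s' + 1) with h | h
    · rw [show n + n' - (s+s'+1) = 0 from by omega]
      omega
    · have hC : (n + n' - (s + s' + 1)) * b + b ≤ (n - s) * b + (n' - s') * b := by
        calc (n + n' - (s + s' + 1)) * b + b = ((n + n' - (s + s' + 1)) + 1) * b := by ring
          _ ≤ ((n - s) + (n' - s')) * b := hmul _ _ (by omega)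
          _ = (n - s) * b + (n' - s') * b := by ring
      omega



/-- Up-sets of exponents. -/
def UpSet (S : Set (Fin 2 →₀ ℕ)) : Prop :=
  ∀ ⦃d e : Fin 2 →₀ ℕ⦄, d ∈ S → d ≤ e → e ∈ S

/-- The ideal of polynomials all of whose monomials have exponents in the up-set `S`. -/
noncomputable def idealOf (k : Type*) [Field k] (S : Set (Fin 2 →₀ ℕ)) (hS : UpSet S) :
    Ideal (MvPolynomial (Fin 2) k) where
  carrier := {p | ∀ d ∈ p.support, d ∈ S}
  zero_mem' := by simp
  add_mem' := by
    intro p q hp hq d hd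
    rcases Finset.mem_union.mp (MvPolynomial.support_add hd) with h | h
    · exact hp d h
    · exact hq d h
  smul_mem' := by
    intro c p hp d hd
    rw [smul_eq_mul] at hd
    obtain ⟨dc, hdc, dp, hdp, rfl⟩ := Finset.mem_add.mp (MvPolynomial.support_mul c p hd)
    exact hS (hp dp hdp) (by simp [Finsupp.le_def])

variable {k : Type*} [Field k]

lemma mem_idealOf {S : Set (Fin 2 →₀ ℕ)} {hS : UpSet S} {p : MvPolynomial (Fin 2) k} :
    p ∈ idealOf k S hS ↔ ∀ d ∈ p.support, d ∈ S := Iff.rfl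

lemma monomial_mem_idealOf {S : Set (Fin 2 →₀ ℕ)} {hS : UpSet S} {d : Fin 2 →₀ ℕ}
    (c : k) (hd : d ∈ S) : (monomial d c : MvPolynomial (Fin 2) k) ∈ idealOf k S hS := by
  intro e he
  have := MvPolynomial.support_monomial_subset he
  simp only [Finset.mem_singleton] at this
  subst this; exact hd

lemma monomial_one_not_mem_idealOf {S : Set (Fin 2 →₀ ℕ)} {hS : UpSet S} {d : Fin 2 →₀ ℕ}
    (hd : d ∉ S) : (monomial d (1:k) : MvPolynomial (Fin 2) k) ∉ idealOf k S hS := by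
  intro h
  classical
  exact hd (h d (by rw [MvPolynomial.support_monomial]; simp))

lemma mul_mem_idealOf {S S' S'' : Set (Fin 2 →₀ ℕ)} {hS : UpSet S} {hS' : UpSet S'}
    {hS'' : UpSet S''} (h : ∀ d ∈ S, ∀ e ∈ S', d + e ∈ S'')
    {p q : MvPolynomial (Fin 2) k} (hp : p ∈ idealOf k S hS) (hq : q ∈ idealOf k S' hS') :
    p * q ∈ idealOf k S'' hS'' := by
  intro d hd
  obtain ⟨dp, hdp, dq, hdq, rfl⟩ := Finset.mem_add.mp (MvPolynomial.support_mul p q hd)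
  exact h _ (hp dp hdp) _ (hq dq hdq)

lemma idealOf_univ : idealOf k Set.univ (fun _ _ _ _ => trivial) = ⊤ := by
  ext p; simp [mem_idealOf]
  exact fun _ _ => trivial




/-- The staircase up-set for `Iₙ`. -/
def SUp (q m n : ℕ) : Set (Fin 2 →₀ ℕ) := {d | tau (2*(q+m)+1) n (d 0) ≤ d 1}

lemma upSet_SUp (q m n : ℕ) : UpSet (SUp q m n) := by
  intro d e hd hde
  have h0 : d 0 ≤ e 0 := hde 0
  have h1 : d 1 ≤ e 1 := hde 1
  exact le_trans (le_trans (tau_antitone _ n (by omega) h0) hd) h1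

noncomputable def SIdeal (k : Type*) [Field k] (q m n : ℕ) : Ideal (MvPolynomial (Fin 2) k) :=
  idealOf k (SUp q m n) (upSet_SUp q m n)

lemma X_pow_mul_X_pow_eq_monomial (e0 e1 : ℕ) :
    (X 0 ^ e0 * X 1 ^ e1 : MvPolynomial (Fin 2) k)
      = monomial (Finsupp.single 0 e0 + Finsupp.single 1 e1) 1 := by
  rw [X_pow_eq_monomial, X_pow_eq_monomial, monomial_mul, mul_one]

lemma pair_apply0 (e0 e1 : ℕ) : ((Finsupp.single (0:Fin 2) e0 + Finsupp.single 1 e1 : Fin 2 →₀ ℕ)) 0 = e0 := by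
  simp [Finsupp.single_apply]

lemma pair_apply1 (e0 e1 : ℕ) : ((Finsupp.single (0:Fin 2) e0 + Finsupp.single 1 e1 : Fin 2 →₀ ℕ)) 1 = e1 := by
  simp [Finsupp.single_apply]

lemma Jideal_le (q m : ℕ) : Jideal k q m ≤ SIdeal k q m 1 := by
  rw [Jideal, Ideal.span_le]
  rintro p (rfl | rfl | rfl)
  · rw [X_pow_eq_monomial]
    apply monomial_mem_idealOf
    show tau (2*(q+m)+1) 1 (Finsupp.single (0:Fin 2) 2 0) ≤ Finsupp.single (0:Fin 2) 2 1
    rw [Finsupp.single_eq_same, Finsupp.single_eq_of_ne (by decide)]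
    show ((1 - 2/2) * (2*(q+m)+1) + (1 - 2 % 2)) / 2 ≤ 0
    omega
  · rw [show (X 0 * X 1 ^ (q+m) : MvPolynomial (Fin 2) k) = X 0 ^ 1 * X 1 ^ (q+m) from by ring,
      X_pow_mul_X_pow_eq_monomial]
    apply monomial_mem_idealOf
    show tau (2*(q+m)+1) 1 _ ≤ _
    rw [pair_apply0, pair_apply1]
    show ((1 - 1/2) * (2*(q+m)+1) + (1 - 1 % 2)) / 2 ≤ q + m
    omega
  · rw [show (X 1 ^ (q+m+1) : MvPolynomial (Fin 2) k) = X 0 ^ 0 * X 1 ^ (q+m+1) from by ring,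
      X_pow_mul_X_pow_eq_monomial]
    apply monomial_mem_idealOf
    show tau (2*(q+m)+1) 1 _ ≤ _
    rw [pair_apply0, pair_apply1]
    show ((1 - 0/2) * (2*(q+m)+1) + (1 - 0 % 2)) / 2 ≤ q + m + 1
    omega

lemma Fideal_le (q m : ℕ) : Fideal k q m ≤ SIdeal k q m 2 := by
  rw [Fideal, Ideal.span_le]
  rintro p (rfl : p = _)
  rw [show (X 1 ^ (2*(q+m)+1) : MvPolynomial (Fin 2) k) = X 0 ^ 0 * X 1 ^ (2*(q+m)+1) from by ring,
    X_pow_mul_X_pow_eq_monomial]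
  apply monomial_mem_idealOf
  show tau (2*(q+m)+1) 2 _ ≤ _
  rw [pair_apply0, pair_apply1]
  show ((2 - 0/2) * (2*(q+m)+1) + (1 - 0 % 2)) / 2 ≤ 2*(q+m)+1
  have : (2 - 0/2) * (2*(q+m)+1) = 2 * (2*(q+m)+1) := by norm_num
  rw [this]
  omega

lemma SIdeal_mul_le (q m : ℕ) (hqm : 2 ≤ q + m) (n n' : ℕ) :
    SIdeal k q m n * SIdeal k q m n' ≤ SIdeal k q m (n + n') := by
  rw [Ideal.mul_le]
  intro p hp q' hq'
  refine mul_mem_idealOf ?_ hp hq'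
  intro d hd e he
  show tau (2*(q+m)+1) (n+n') ((d+e) 0) ≤ (d+e) 1
  rw [Finsupp.add_apply, Finsupp.add_apply]
  exact le_trans (tau_superadd _ (by omega) n n' (d 0) (e 0)) (Nat.add_le_add hd he)

lemma mem_SIdeal_zero (p : MvPolynomial (Fin 2) k) (q m : ℕ) : p ∈ SIdeal k q m 0 := by
  rw [SIdeal, mem_idealOf]
  intro d _
  show tau (2*(q+m)+1) 0 (d 0) ≤ d 1
  rw [tau_zero]
  exact Nat.zero_le _

lemma Jideal_pow_le (q m : ℕ) (hqm : 2 ≤ q + m) (c : ℕ) :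
    (Jideal k q m) ^ c ≤ SIdeal k q m c := by
  induction c with
  | zero => intro p _; exact mem_SIdeal_zero p q m
  | succ c ih =>
    rw [pow_succ]
    calc (Jideal k q m) ^ c * Jideal k q m
        ≤ SIdeal k q m c * SIdeal k q m 1 := mul_le_mul' ih (Jideal_le q m)
      _ ≤ SIdeal k q m (c + 1) := SIdeal_mul_le q m hqm c 1

lemma Fideal_pow_le (q m : ℕ) (hqm : 2 ≤ q + m) (c : ℕ) :
    (Fideal k q m) ^ c ≤ SIdeal k q m (2 * c) := by
  induction c with
  | zero => intro p _; exact mem_SIdeal_zero p q m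
  | succ c ih =>
    rw [pow_succ]
    calc (Fideal k q m) ^ c * Fideal k q m
        ≤ SIdeal k q m (2*c) * SIdeal k q m 2 := mul_le_mul' ih (Fideal_le q m)
      _ ≤ SIdeal k q m (2*c + 2) := SIdeal_mul_le q m hqm (2*c) 2
      _ = SIdeal k q m (2*(c+1)) := by ring_nf

lemma Iideal_le_SIdeal (q m n : ℕ) (hqm : 2 ≤ q + m) :
    Iideal k q m n ≤ SIdeal k q m n := by
  rw [Iideal]
  apply iSup_le; intro c
  apply iSup_le; intro hc
  calc (Fideal k q m) ^ c.2 * (Jideal k q m) ^ c.1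
      ≤ SIdeal k q m (2*c.2) * SIdeal k q m c.1 :=
        mul_le_mul' (Fideal_pow_le q m hqm c.2) (Jideal_pow_le q m hqm c.1)
    _ ≤ SIdeal k q m (2*c.2 + c.1) := SIdeal_mul_le q m hqm _ _
    _ = SIdeal k q m n := by rw [show 2*c.2 + c.1 = n from by omega]



/-- The generator monomial with `J`-exponents `(c1,c2,c3)` and `F`-exponent `n2` lies in
`F^{n2} * J^{c1+c2+c3}`. -/
lemma gen_mem (q m c1 c2 c3 n2 : ℕ) :
    (X 0 ^ (2*c1+c2) * X 1 ^ ((q+m)*c2 + (q+m+1)*c3 + (2*(q+m)+1)*n2) : MvPolynomial (Fin 2) k)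
      ∈ (Fideal k q m) ^ n2 * (Jideal k q m) ^ (c1+c2+c3) := by
  have key : (X 0 ^ (2*c1+c2) * X 1 ^ ((q+m)*c2 + (q+m+1)*c3 + (2*(q+m)+1)*n2)
      : MvPolynomial (Fin 2) k)
      = (X 1 ^ (2*(q+m)+1)) ^ n2 *
        ((X 0 ^ 2) ^ c1 * ((X 0 * X 1 ^ (q+m)) ^ c2 * (X 1 ^ (q+m+1)) ^ c3)) := by
    ring
  rw [key]
  apply Ideal.mul_mem_mul
  · exact Ideal.pow_mem_pow (Ideal.subset_span (by simp)) n2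
  · rw [show c1 + c2 + c3 = c1 + (c2 + c3) from by ring, pow_add, pow_add]
    apply Ideal.mul_mem_mul
    · exact Ideal.pow_mem_pow (Ideal.subset_span (by simp)) c1
    · exact Ideal.mul_mem_mul
        (Ideal.pow_mem_pow (Ideal.subset_span (by simp)) c2)
        (Ideal.pow_mem_pow (Ideal.subset_span (by simp)) c3)

/-- If the exponent of a monomial dominates a generator exponent with the right degree count,
the monomial is in `Iₙ`. -/
lemma monomial_mem_Iideal_of_dom (q m n : ℕ) (d : Fin 2 →₀ ℕ) (c : k)
    (c1 c2 c3 n2 : ℕ) (hsum : c1 + c2 + c3 + 2*n2 = n)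
    (hgi : 2*c1 + c2 ≤ d 0) (hgj : (q+m)*c2 + (q+m+1)*c3 + (2*(q+m)+1)*n2 ≤ d 1) :
    (monomial d c : MvPolynomial (Fin 2) k) ∈ Iideal k q m n := by
  set g : Fin 2 →₀ ℕ :=
    Finsupp.single 0 (2*c1+c2) + Finsupp.single 1 ((q+m)*c2 + (q+m+1)*c3 + (2*(q+m)+1)*n2)
    with hg
  have hdg : d - g + g = d := by
    ext x
    fin_cases x
    · show (d - g + g) 0 = d 0
      rw [Finsupp.add_apply, Finsupp.tsub_apply, hg, pair_apply0]
      omega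
    · show (d - g + g) 1 = d 1
      rw [Finsupp.add_apply, Finsupp.tsub_apply, hg, pair_apply1]
      omega
  have hmono : (monomial d c : MvPolynomial (Fin 2) k)
      = monomial (d - g) c * monomial g 1 := by
    rw [monomial_mul, mul_one, hdg]
  have hFJ : (Fideal k q m) ^ n2 * (Jideal k q m) ^ (c1+c2+c3) ≤ Iideal k q m n := by
    have := le_iSup (fun c : ℕ × ℕ => ⨆ (_ : c.1 + 2 * c.2 = n),
      (Fideal k q m) ^ c.2 * (Jideal k q m) ^ c.1) (c1+c2+c3, n2)
    refine le_trans ?_ this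
    simp only []
    exact le_iSup_of_le (by omega) le_rfl
  rw [hmono]
  apply Ideal.mul_mem_left
  apply hFJ
  rw [hg, ← X_pow_mul_X_pow_eq_monomial]
  exact gen_mem q m c1 c2 c3 n2

lemma monomial_mem_Iideal (q m n : ℕ) (d : Fin 2 →₀ ℕ) (c : k) (hd : d ∈ SUp q m n) :
    (monomial d c : MvPolynomial (Fin 2) k) ∈ Iideal k q m n := by
  have hd' : ((n - d 0 / 2) * (2*(q+m)+1) + (1 - d 0 % 2)) / 2 ≤ d 1 := hd
  set a := q + m with ha
  rcases le_or_gt n (d 0 / 2) with h | h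
  · -- i ≥ 2n : use (n,0,0,0)
    refine monomial_mem_Iideal_of_dom q m n d c n 0 0 0 (by omega) (by omega) (by simp)
  · set s := d 0 / 2 with hs
    set z := n - s with hz
    have hz1 : 1 ≤ z := by omega
    rcases Nat.even_or_odd z with ⟨w, hw⟩ | ⟨w, hw⟩
    · -- z = 2w : use (s,0,0,w)
      refine monomial_mem_Iideal_of_dom q m n d c s 0 0 w (by omega) (by omega) ?_
      have e1 : (n - d 0 / 2) * (2*a+1) = 2*((2*a+1)*w) := by
        rw [← hs, ← hz, hw]; ring
      rw [e1] at hd'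
      have hrw : (2*(q+m)+1)*w = (2*a+1)*w := by rw [← ha]
      simp only [Nat.mul_zero, Nat.zero_add, Nat.add_zero]
      omega
    · -- z = 2w+1
      have e1 : (n - d 0 / 2) * (2*a+1) = 2*((2*a+1)*w) + 2*a + 1 := by
        rw [← hs, ← hz, hw]; ring
      rw [e1] at hd'
      rcases Nat.even_or_odd (d 0) with ⟨t, ht⟩ | ⟨t, ht⟩
      · -- i even: use (s,0,1,w)
        refine monomial_mem_Iideal_of_dom q m n d c s 0 1 w (by omega) (by omega) ?_
        have h2 : d 0 % 2 = 0 := by omega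
        rw [h2] at hd'
        have hrw : (2*(q+m)+1)*w = (2*a+1)*w := by rw [← ha]
        simp only [Nat.mul_zero, Nat.zero_add, Nat.mul_one]
        omega
      · -- i odd: use (s,1,0,w)
        refine monomial_mem_Iideal_of_dom q m n d c s 1 0 w (by omega) ?_ ?_
        · omega
        · have h2 : d 0 % 2 = 1 := by omega
          rw [h2] at hd'
          have hrw : (2*(q+m)+1)*w = (2*a+1)*w := by rw [← ha]
          simp only [Nat.mul_one, Nat.mul_zero, Nat.add_zero]
          omega

lemma SIdeal_le_Iideal (q m n : ℕ) : SIdeal k q m n ≤ Iideal k q m n := by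
  intro p hp
  rw [SIdeal, mem_idealOf] at hp
  rw [MvPolynomial.as_sum p]
  exact Ideal.sum_mem _ (fun d hd => monomial_mem_Iideal q m n d _ (hp d hd))


attribute [local instance 10] Classical.propDecidable

section Upper

variable (K A M : Type*) [Field K] [Ring A] [AddCommGroup M] [Module A M]
  [Module K M] [SMul K A] [IsScalarTower K A M] [FiniteDimensional K M]

lemma krullDim_submodule_le :
    Order.krullDim (Submodule A M) ≤ (Module.finrank K M : WithBot ℕ∞) := by
  show (⨆ (p : LTSeries (Submodule A M)), (p.length : WithBot ℕ∞)) ≤ _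
  refine iSup_le fun p => ?_
  have hmono : StrictMono (fun W : Submodule A M => Module.finrank K (W.restrictScalars K)) := by
    intro W W' hWW
    apply Submodule.finrank_lt_finrank_of_lt
    refine lt_of_le_of_ne (fun x hx => hWW.le hx) ?_
    intro h
    exact hWW.ne (Submodule.restrictScalars_injective K A M h)
  have hlast : (p.map _ hmono).last ≤ Module.finrank K M := Submodule.finrank_le _
  have := (p.map _ hmono).head_add_length_le_nat
  have hlen : p.length ≤ Module.finrank K M := by
    have hl : (p.map _ hmono).length = p.length := rfl
    omega
  exact_mod_cast Nat.cast_le.mpr hlen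

end Upper

section Span

variable (S : Set (Fin 2 →₀ ℕ)) (hS : UpSet S) (D : Finset (Fin 2 →₀ ℕ))

lemma top_le_span (hD : ∀ d, d ∉ S → d ∈ D) :
    (⊤ : Submodule k (MvPolynomial (Fin 2) k ⧸ idealOf k S hS)) ≤
      Submodule.span k
        ((D.image (fun d => Ideal.Quotient.mkₐ k (idealOf k S hS) (monomial d 1)) :
          Finset (MvPolynomial (Fin 2) k ⧸ idealOf k S hS)) : Set _) := by
  intro x _
  obtain ⟨p, rfl⟩ := Ideal.Quotient.mkₐ_surjective k (idealOf k S hS) x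
  rw [MvPolynomial.as_sum p, map_sum]
  refine Submodule.sum_mem _ fun d hd => ?_
  by_cases hdS : d ∈ S
  · have : (Ideal.Quotient.mkₐ k (idealOf k S hS)) (monomial d (coeff d p)) = 0 := by
      rw [Ideal.Quotient.mkₐ_eq_mk, Ideal.Quotient.eq_zero_iff_mem]
      exact monomial_mem_idealOf _ hdS
    rw [this]; exact Submodule.zero_mem _
  · have h1 : (monomial d (coeff d p) : MvPolynomial (Fin 2) k)
        = coeff d p • monomial d 1 := by
      rw [MvPolynomial.smul_monomial, smul_eq_mul, mul_one]
    rw [h1, map_smul]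
    refine Submodule.smul_mem _ _ (Submodule.subset_span ?_)
    simp only [Finset.coe_image, Set.mem_image, Finset.mem_coe]
    exact ⟨d, hD d hdS, rfl⟩

lemma finiteDimensional_quot (hD : ∀ d, d ∉ S → d ∈ D) :
    FiniteDimensional k (MvPolynomial (Fin 2) k ⧸ idealOf k S hS) := by
  classical
  exact ⟨⟨D.image (fun d => Ideal.Quotient.mkₐ k (idealOf k S hS) (monomial d 1)),
    eq_top_iff.mpr (top_le_span S hS D hD)⟩⟩


lemma finrank_quot_le (hD : ∀ d, d ∉ S → d ∈ D) :
    Module.finrank k (MvPolynomial (Fin 2) k ⧸ idealOf k S hS) ≤ D.card := by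
  classical
  have hfd := finiteDimensional_quot (k := k) S hS D hD
  have h1 : Submodule.span k
      ((D.image (fun d => Ideal.Quotient.mkₐ k (idealOf k S hS) (monomial d 1)) :
        Finset (MvPolynomial (Fin 2) k ⧸ idealOf k S hS)) :
        Set (MvPolynomial (Fin 2) k ⧸ idealOf k S hS)) = ⊤ :=
    eq_top_iff.mpr (top_le_span S hS D hD)
  have h2 := finrank_span_le_card (R := k)
    ((D.image (fun d => Ideal.Quotient.mkₐ k (idealOf k S hS) (monomial d 1)) :
      Finset (MvPolynomial (Fin 2) k ⧸ idealOf k S hS)) :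
      Set (MvPolynomial (Fin 2) k ⧸ idealOf k S hS))
  rw [h1, finrank_top, Finset.toFinset_coe] at h2
  exact le_trans h2 Finset.card_image_le
end Span

section Chain

/-- For an up-set with finite complement of size `c`, there is a strictly increasing chain
of `c+1` monomial ideals starting at `idealOf S`. -/
lemma exists_chain : ∀ (c : ℕ) (S : Set (Fin 2 →₀ ℕ)) (hS : UpSet S)
    (D : Finset (Fin 2 →₀ ℕ)) (_ : ∀ d, d ∈ D ↔ d ∉ S) (_ : D.card = c),
    ∃ f : ℕ → Ideal (MvPolynomial (Fin 2) k),
      f 0 = idealOf k S hS ∧ ∀ i, i < c → f i < f (i + 1) := by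
  classical
  intro c
  induction c with
  | zero => exact fun S hS D hD hc => ⟨fun _ => idealOf k S hS, rfl, fun i hi => by omega⟩
  | succ c ih =>
    intro S hS D hD hc
    have hne : D.Nonempty := Finset.card_pos.mp (by omega)
    obtain ⟨dmax, hdmem, hdmax⟩ := Finset.exists_max_image D (fun d => d 0 + d 1) hne
    have hdS : dmax ∉ S := (hD dmax).mp hdmem
    set S' : Set (Fin 2 →₀ ℕ) := insert dmax S with hS'def
    have hS' : UpSet S' := by
      rintro d e (rfl | hdSmem) hde
      · rcases eq_or_ne e d with rfl | hne'
        · exact Set.mem_insert _ _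
        · right
          by_contra heS
          have heD : e ∈ D := (hD e).mpr heS
          have hdeg : d 0 + d 1 < e 0 + e 1 := by
            have h0 : d 0 ≤ e 0 := hde 0
            have h1 : d 1 ≤ e 1 := hde 1
            rcases Nat.lt_or_ge (d 0 + d 1) (e 0 + e 1) with h | h
            · exact h
            · exfalso
              apply hne'
              ext x
              fin_cases x
              · show e 0 = d 0; omega
              · show e 1 = d 1; omega
          exact absurd (hdmax e heD) (by omega)
      · exact Set.mem_insert_of_mem _ (hS hdSmem hde)
    have hD' : ∀ d, d ∈ D.erase dmax ↔ d ∉ S' := by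
      intro d
      rw [Finset.mem_erase, hD d, hS'def]
      simp only [Set.mem_insert_iff]
      tauto
    obtain ⟨f', hf'0, hf'step⟩ := ih S' hS' (D.erase dmax) hD'
      (by rw [Finset.card_erase_of_mem hdmem, hc]; omega)
    refine ⟨fun i => Nat.casesOn i (idealOf k S hS) (fun j => f' j), rfl, ?_⟩
    intro i hi
    rcases Nat.eq_zero_or_pos i with rfl | hpos
    · show idealOf k S hS < f' 0
      rw [hf'0]
      refine lt_of_le_of_ne ?_ ?_
      · intro p hp
        rw [mem_idealOf] at hp ⊢
        exact fun d hd => Set.mem_insert_of_mem _ (hp d hd)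
      · intro h
        have h1 : (monomial dmax 1 : MvPolynomial (Fin 2) k) ∈ idealOf k S' hS' :=
          monomial_mem_idealOf 1 (Set.mem_insert _ _)
        rw [← h] at h1
        exact monomial_one_not_mem_idealOf hdS h1
    · obtain ⟨j, rfl⟩ : ∃ j, i = j + 1 := ⟨i - 1, by omega⟩
      show f' j < f' (j+1)
      exact hf'step j (by omega)

/-- Mapping a strict chain of ideals containing `I` into the quotient `R ⧸ I`. -/
lemma le_krullDim_quotient (I : Ideal (MvPolynomial (Fin 2) k)) (c : ℕ)
    (f : ℕ → Ideal (MvPolynomial (Fin 2) k)) (h0 : f 0 = I)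
    (hstep : ∀ i, i < c → f i < f (i + 1)) :
    (c : WithBot ℕ∞) ≤ Order.krullDim (Submodule (MvPolynomial (Fin 2) k)
      (MvPolynomial (Fin 2) k ⧸ I)) := by
  have hge : ∀ i, i ≤ c → I ≤ f i := by
    intro i
    induction i with
    | zero => intro _; rw [h0]
    | succ i ih => intro h; exact le_trans (ih (by omega)) (hstep i (by omega)).le
  have hstrict : ∀ i, i < c →
      Submodule.map I.mkQ (f i) < Submodule.map I.mkQ (f (i + 1)) := by
    intro i hi
    refine lt_of_le_of_ne (Submodule.map_mono (hstep i hi).le) ?_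
    intro h
    have := congrArg (Submodule.comap I.mkQ) h
    rw [Submodule.comap_map_mkQ, Submodule.comap_map_mkQ] at this
    rw [sup_eq_right.mpr (hge i hi.le), sup_eq_right.mpr (hge (i+1) hi)] at this
    exact (hstep i hi).ne this
  let p : LTSeries (Submodule (MvPolynomial (Fin 2) k) (MvPolynomial (Fin 2) k ⧸ I)) :=
    ⟨c, fun j => Submodule.map I.mkQ (f j), fun j => hstrict j j.2⟩
  have := Order.LTSeries.length_le_krullDim p
  exact_mod_cast this

end Chain



lemma tau_big_eq_zero (b n i : ℕ) (h : 2*n ≤ i) : tau b n i = 0 := by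
  unfold tau
  rw [show n - i/2 = 0 from by omega]
  omega

noncomputable def pairFinsupp (p : ℕ × ℕ) : Fin 2 →₀ ℕ := Finsupp.single 0 p.1 + Finsupp.single 1 p.2

lemma pairFinsupp_apply0 (p : ℕ × ℕ) : pairFinsupp p 0 = p.1 := pair_apply0 _ _
lemma pairFinsupp_apply1 (p : ℕ × ℕ) : pairFinsupp p 1 = p.2 := pair_apply1 _ _

lemma pairFinsupp_eq_self (d : Fin 2 →₀ ℕ) : pairFinsupp (d 0, d 1) = d := by
  ext x
  fin_cases x
  · show pairFinsupp (d 0, d 1) 0 = d 0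
    rw [pairFinsupp_apply0]
  · show pairFinsupp (d 0, d 1) 1 = d 1
    rw [pairFinsupp_apply1]

lemma pairFinsupp_inj : Function.Injective pairFinsupp := by
  intro p p' h
  have h0 := congrArg (fun d : Fin 2 →₀ ℕ => d 0) h
  have h1 := congrArg (fun d : Fin 2 →₀ ℕ => d 1) h
  simp only [pairFinsupp_apply0, pairFinsupp_apply1] at h0 h1
  exact Prod.ext h0 h1

/-- The finite set of exponents *not* in the staircase up-set. -/
noncomputable def cobasis (q m n : ℕ) : Finset (Fin 2 →₀ ℕ) := by
  classical
  exact ((Finset.range (2*n)).biUnion (fun i =>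
    (Finset.range (tau (2*(q+m)+1) n i)).image (fun j => (i, j)))).image pairFinsupp

lemma mem_cobasis (q m n : ℕ) (d : Fin 2 →₀ ℕ) :
    d ∈ cobasis q m n ↔ d ∉ SUp q m n := by
  classical
  unfold cobasis
  simp only [Finset.mem_image, Finset.mem_biUnion, Finset.mem_range]
  constructor
  · rintro ⟨p, ⟨i, hi, ⟨j, hj, rfl⟩⟩, rfl⟩
    intro hS
    have hS' : tau (2*(q+m)+1) n (pairFinsupp (i,j) 0) ≤ pairFinsupp (i,j) 1 := hS
    rw [pairFinsupp_apply0, pairFinsupp_apply1] at hS'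
    have hS'' : tau (2*(q+m)+1) n i ≤ j := hS'
    omega
  · intro hS
    have hlt : d 1 < tau (2*(q+m)+1) n (d 0) := by
      by_contra h
      exact hS (by simpa [SUp] using Nat.le_of_not_lt h)
    have hd0 : d 0 < 2*n := by
      by_contra h
      rw [tau_big_eq_zero _ _ _ (by omega)] at hlt
      omega
    exact ⟨(d 0, d 1), ⟨d 0, hd0, ⟨d 1, hlt, rfl⟩⟩, pairFinsupp_eq_self d⟩

lemma sum_range_two_mul (c : ℕ) (f : ℕ → ℕ) :
    ∑ i ∈ Finset.range (2*c), f i = ∑ s ∈ Finset.range c, (f (2*s) + f (2*s+1)) := by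
  induction c with
  | zero => simp
  | succ c ih =>
    rw [show 2*(c+1) = (2*c+1)+1 from by ring, Finset.sum_range_succ, Finset.sum_range_succ,
      ih, Finset.sum_range_succ]
    ring

lemma sum_tau (b n : ℕ) :
    ∑ i ∈ Finset.range (2*n), tau b n i = b * Nat.choose (n+1) 2 := by
  rw [sum_range_two_mul]
  have hterm : ∀ s ∈ Finset.range n, tau b n (2*s) + tau b n (2*s+1) = (n - s) * b := by
    intro s _
    rw [show 2*s = 2*s + 0 from rfl, tau_eval b n s 0 (by omega), tau_eval b n s 1 (by omega)]
    omega
  rw [Finset.sum_congr rfl hterm]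
  have hrefl := Finset.sum_range_reflect (fun s => (s+1) * b) n
  have hterm2 : ∀ j ∈ Finset.range n, (n - 1 - j + 1) * b = (n - j) * b := by
    intro j hj
    rw [Finset.mem_range] at hj
    congr 1
    omega
  rw [Finset.sum_congr rfl hterm2] at hrefl
  rw [hrefl, ← Finset.sum_mul]
  have h1 : ∑ s ∈ Finset.range n, (s+1) = (n+1).choose 2 := by
    have h2 := Finset.sum_range_id_mul_two (n+1)
    have h3 := Nat.choose_two_right (n+1)
    simp only [Nat.add_sub_cancel] at h2 h3
    have h4 : ∑ i ∈ Finset.range (n+1), i = (∑ s ∈ Finset.range n, (s+1)) + 0 :=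
      Finset.sum_range_succ' _ n
    set A := (n+1) * n
    omega
  rw [h1, mul_comm]

lemma card_cobasis (q m n : ℕ) :
    (cobasis q m n).card = (2*(q+m)+1) * Nat.choose (n+1) 2 := by
  classical
  unfold cobasis
  rw [Finset.card_image_of_injective _ pairFinsupp_inj]
  rw [Finset.card_biUnion]
  · calc ∑ i ∈ Finset.range (2*n), ((Finset.range (tau (2*(q+m)+1) n i)).image
        (fun j => (i, j))).card
        = ∑ i ∈ Finset.range (2*n), tau (2*(q+m)+1) n i := by
          refine Finset.sum_congr rfl fun i _ => ?_
          rw [Finset.card_image_of_injective _ (fun a b h => (Prod.ext_iff.mp h).2),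
            Finset.card_range]
      _ = (2*(q+m)+1) * Nat.choose (n+1) 2 := sum_tau _ n
  · intro x _ y _ hxy
    simp only [Finset.disjoint_left, Finset.mem_image, Finset.mem_range]
    rintro p ⟨j, hj, rfl⟩ ⟨j', hj', h⟩
    exact hxy (Prod.ext_iff.mp h).1.symm


lemma main (q m n : ℕ) (hqm : 2 ≤ q + m) :
    Order.krullDim (Submodule (MvPolynomial (Fin 2) k)
      (MvPolynomial (Fin 2) k ⧸ idealOf k (SUp q m n) (upSet_SUp q m n)))
      = (((2*(q+m)+1) * Nat.choose (n+1) 2 : ℕ) : WithBot ℕ∞) := by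
  have hD : ∀ d, d ∈ cobasis q m n ↔ d ∉ SUp q m n := mem_cobasis q m n
  have hcard := card_cobasis q m n
  apply le_antisymm
  · haveI := finiteDimensional_quot (k := k) (SUp q m n) (upSet_SUp q m n) (cobasis q m n)
      (fun d hd => (hD d).mpr hd)
    refine le_trans (krullDim_submodule_le k (MvPolynomial (Fin 2) k) _) ?_
    have h2 := finrank_quot_le (k := k) (SUp q m n) (upSet_SUp q m n) (cobasis q m n)
      (fun d hd => (hD d).mpr hd)
    rw [hcard] at h2
    exact_mod_cast h2
  · obtain ⟨f, hf0, hfstep⟩ := exists_chain (k := k) _ (SUp q m n) (upSet_SUp q m n)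
      (cobasis q m n) hD hcard
    exact le_krullDim_quotient _ _ f hf0 hfstep

end St7

/-- For all `n ≥ 1`, `ℓ_T(T/Iₙ) = (2(q+m)+1)·C(n+1,2)`. -/
theorem statement7 (k : Type*) [Field k] (q m : ℕ) (hq : 1 ≤ q) (hm : 1 ≤ m) :
    ∀ n : ℕ, 1 ≤ n →
      moduleLength (MvPolynomial (Fin 2) k)
          (MvPolynomial (Fin 2) k ⧸ Iideal k q m n)
        = (((2*(q+m)+1) * Nat.choose (n+1) 2 : ℕ) : WithBot ℕ∞) := by
  intro n hn
  have hqm : 2 ≤ q + m := by omega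
  have hIeq : Iideal k q m n
      = St7.idealOf k (St7.SUp q m n) (St7.upSet_SUp q m n) :=
    le_antisymm (St7.Iideal_le_SIdeal q m n hqm) (St7.SIdeal_le_Iideal q m n)
  unfold moduleLength
  rw [hIeq]
  exact St7.main q m n hqm
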